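/- Let R be the differential graded ring (normalized chain complex) with a generator 1 in degree 0 and a generator t in degree 1, with differential d(t) = pⁿ·1. The Hochschild homology of R over ℤ satisfies HH_{2k}(R) ≅ ℤ/pⁿ for all k ≥ 0, and HH_{2k-1}(R) = 0 for all k ≥ 1. -/

import Mathlib

open CategoryTheory

/-- The normalized Hochschild chain complex of the dg ring `R` with generators `1` in
degree `0` and `t` in degree `1` and `d(t) = c·1`: it has one free generator
(`1⊗t^{⊗k}` in degree `2k`, `t^{⊗k}` in degree `2k-1`), and the Hochschild boundary
`b` takes `t^{⊗k}` to `c·(1⊗t^{⊗(k-1)})`; i.e. the complex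
`⋯ → ℤ →0→ ℤ →c→ ℤ →0→ ℤ →c→ ℤ` with multiplication by `c` from odd to even degrees. -/
noncomputable def hochschildComplex (c : ℤ) : ChainComplex (ModuleCat ℤ) ℕ :=
  ChainComplex.of (fun _ => ModuleCat.of ℤ ℤ)
    (fun n => if Even n then ModuleCat.ofHom (c • LinearMap.id) else 0)
    (by
      intro n
      rcases Nat.even_or_odd n with h | h
      · have h' : ¬ Even (n + 1) := by simp [Nat.even_add_one, h]
        simp only [if_neg h']
        exact Limits.zero_comp
      · simp only [if_neg (Nat.not_even_iff_odd.mpr h)]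
        exact Limits.comp_zero)

section Aux
open HomologicalComplex

lemma hc_d (c : ℤ) (m : ℕ) :
    (hochschildComplex c).d (m + 1) m
      = if Even m then ModuleCat.ofHom (c • LinearMap.id) else 0 :=
  ChainComplex.of_d (fun _ => ModuleCat.of ℤ ℤ) (fun n => if Even n then ModuleCat.ofHom (c • LinearMap.id) else 0) m

lemma hc_d_even (c : ℤ) (m : ℕ) (hm : Even m) :
    (hochschildComplex c).d (m + 1) m = ModuleCat.ofHom (c • LinearMap.id) := by
  rw [hc_d, if_pos hm]

lemma hc_d_odd (c : ℤ) (m : ℕ) (hm : ¬ Even m) :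
    (hochschildComplex c).d (m + 1) m = 0 := by
  rw [hc_d, if_neg hm]; rfl

/-- the model short complex for even degrees -/
noncomputable def S0 (c : ℤ) : ShortComplex (ModuleCat ℤ) :=
  ShortComplex.mk (ModuleCat.ofHom (c • LinearMap.id) : ModuleCat.of ℤ ℤ ⟶ ModuleCat.of ℤ ℤ)
    (0 : ModuleCat.of ℤ ℤ ⟶ ModuleCat.of ℤ ℤ) (by simp)

noncomputable def evenIso (c : ℤ) (k : ℕ) :
    (hochschildComplex c).sc' (2 * k + 1) (2 * k) (2 * k - 1) ≅ S0 c :=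
  ShortComplex.isoMk (Iso.refl _) (Iso.refl _) (Iso.refl _)
    (by
      dsimp [S0, HomologicalComplex.sc', HomologicalComplex.shortComplexFunctor']
      rw [hc_d_even c (2 * k) (even_two_mul k)]
      rfl)
    (by
      dsimp [S0, HomologicalComplex.sc', HomologicalComplex.shortComplexFunctor']
      rcases k with _ | m
      · simp [HomologicalComplex.shape]; rfl
      · have : 2 * (m + 1) - 1 = (2 * m) + 1 := by omega
        rw [this]
        have h2 : 2 * (m + 1) = (2 * m + 1) + 1 := by omega
        rw [h2, hc_d_odd c (2 * m + 1) (by simp [Nat.even_add_one])]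
        rfl)

noncomputable def e1def (c : ℤ) : LinearMap.ker (S0 c).g.hom ≃ₗ[ℤ] ℤ :=
  (LinearEquiv.ofEq _ ⊤ (by ext x; simp [S0]; exact ⟨fun _ => trivial, fun _ => rfl⟩)).trans Submodule.topEquiv

@[simp] lemma e1def_apply (c : ℤ) (x : LinearMap.ker (S0 c).g.hom) : e1def c x = x.1 := rfl

noncomputable def S0HomologyIso (c : ℤ) (hc : 0 < c) :
    (S0 c).homology ≅ ModuleCat.of ℤ (ZMod c.toNat) := by
  refine (S0 c).moduleCatHomologyIso ≪≫ ?_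
  refine LinearEquiv.toModuleIso ?_
  have e2 : (ℤ ⧸ Ideal.span ({c} : Set ℤ)) ≃ₗ[ℤ] ZMod c.toNat := by
    have hcc : ((c.toNat : ℤ)) = c := Int.toNat_of_nonneg hc.le
    exact ((Ideal.quotEquivOfEq (by rw [hcc])).trans
      (Int.quotientSpanNatEquivZMod c.toNat)).toAddEquiv.toIntLinearEquiv
  refine (Submodule.Quotient.equiv (LinearMap.range (S0 c).moduleCatToCycles) (Ideal.span {c}) (e1def c) ?_).trans e2
  · ext y
    simp only [Submodule.mem_map, LinearMap.mem_range, Ideal.mem_span_singleton]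
    constructor
    · rintro ⟨-, ⟨x, rfl⟩, rfl⟩
      exact ⟨x, by erw [e1def_apply]; simp [ShortComplex.moduleCatToCycles, S0, mul_comm]; rfl⟩
    · rintro ⟨d, rfl⟩
      refine ⟨(S0 c).moduleCatToCycles d, ⟨d, rfl⟩, ?_⟩
      erw [e1def_apply]; simp [ShortComplex.moduleCatToCycles, S0, mul_comm]; rfl







noncomputable def S1 (c : ℤ) : ShortComplex (ModuleCat ℤ) :=
  ShortComplex.mk (0 : ModuleCat.of ℤ ℤ ⟶ ModuleCat.of ℤ ℤ)
    (ModuleCat.ofHom (c • LinearMap.id) : ModuleCat.of ℤ ℤ ⟶ ModuleCat.of ℤ ℤ) (by simp)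

noncomputable def oddIso (c : ℤ) (m : ℕ) :
    (hochschildComplex c).sc' (2 * m + 2) (2 * m + 1) (2 * m) ≅ S1 c :=
  ShortComplex.isoMk (Iso.refl _) (Iso.refl _) (Iso.refl _)
    (by
      dsimp [S1, HomologicalComplex.sc', HomologicalComplex.shortComplexFunctor']
      rw [show 2 * m + 2 = (2 * m + 1) + 1 from rfl,
        hc_d_odd c (2 * m + 1) (by simp [Nat.even_add_one])]
      rfl)
    (by
      dsimp [S1, HomologicalComplex.sc', HomologicalComplex.shortComplexFunctor']
      rw [hc_d_even c (2 * m) (even_two_mul m)]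
      rfl)

lemma S1_exact (c : ℤ) (hc : c ≠ 0) : (S1 c).Exact := by
  rw [ShortComplex.moduleCat_exact_iff]
  intro x hx
  refine ⟨0, ?_⟩
  have hx0 : x = 0 := by
    have h : c • x = 0 := by simp [S1] at hx; exact hx
    have h2 : c * (show ℤ from x) = 0 := h
    exact (mul_eq_zero.mp h2).resolve_left hc
  simp [S1, hx0]; rfl

end Aux

/-- The Hochschild homology of the dg ring `R` with generators `1` (degree 0) and `t`
(degree 1), `d(t) = pⁿ·1`, i.e. the derived Hochschild (Shukla) homology of `ℤ/pⁿ`: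
`HH_{2k}(R) ≅ ℤ/pⁿ` for all `k ≥ 0` and `HH_{2k-1}(R) = 0` for all `k ≥ 1`. -/
theorem stmt7 (p n : ℕ) (hp : p.Prime) :
    (∀ k : ℕ, Nonempty
      ((hochschildComplex ((p : ℤ) ^ n)).homology (2 * k) ≅
        ModuleCat.of ℤ (ZMod (p ^ n)))) ∧
    (∀ k : ℕ, 1 ≤ k →
      Limits.IsZero ((hochschildComplex ((p : ℤ) ^ n)).homology (2 * k - 1))) := by
  constructor
  · intro k
    have hc : (0:ℤ) < (p:ℤ) ^ n := by have := hp.pos; positivity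
    have hnext : (ComplexShape.down ℕ).next (2 * k) = 2 * k - 1 := by
      rcases k with _ | m
      · simp [ChainComplex.next_nat_zero]
      · have h2 : 2 * (m+1) = (2*m+1) + 1 := by omega
        rw [h2, ChainComplex.next_nat_succ]; omega
    refine ⟨(HomologicalComplex.homologyIsoSc' _ (2*k+1) (2*k) (2*k-1)
        (ChainComplex.prev ℕ (2*k)) hnext) ≪≫
      ShortComplex.homologyMapIso (evenIso _ k) ≪≫ S0HomologyIso _ hc ≪≫ ?_⟩
    have h3 : ((p:ℤ)^n).toNat = p ^ n := by
      rw [← Nat.cast_pow, Int.toNat_natCast]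
    rw [h3]
  · intro k hk
    obtain ⟨m, rfl⟩ : ∃ m, k = m + 1 := ⟨k - 1, by omega⟩
    have hj : 2 * (m + 1) - 1 = 2 * m + 1 := by omega
    rw [hj]
    rw [← HomologicalComplex.exactAt_iff_isZero_homology]
    rw [HomologicalComplex.exactAt_iff' _ (2 * m + 2) (2 * m + 1) (2 * m)
      (by simp [ChainComplex.prev]) (by simp [ChainComplex.next_nat_succ])]
    rw [ShortComplex.exact_iff_of_iso (oddIso _ m)]
    refine S1_exact _ ?_
    have := hp.pos
    positivity
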